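/- Let m ≥ 2 and let f_m be the m-th power polynomial. Then every z ∈ ℂ at which the derivative f_m′ vanishes satisfies f_m(z) ∈ {0, 1}. Moreover: if m is even, then every complex root of f_m has multiplicity exactly 2, while 0 and 1 are roots of f_m − 1 of multiplicity exactly 1 and every other complex root of f_m − 1 has multiplicity exactly 2; if m is odd, then 0 is a root of f_m of multiplicity exactly 1 and every other complex root of f_m has multiplicity exactly 2, while 1 is a root of f_m − 1 of multiplicity exactly 1 and every other complex root of f_m − 1 has multiplicity exactly 2. -/
import Mathlib

open Polynomial Complex

private lemma multOne (p : ℂ[X]) (z : ℂ) (h0 : p.eval z = 0)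
    (h1 : p.derivative.eval z ≠ 0) : p.rootMultiplicity z = 1 := by
  have hp : p ≠ 0 := fun h => h1 (by simp [h])
  have hpos : 0 < p.rootMultiplicity z := (rootMultiplicity_pos hp).2 h0
  have hd := derivative_rootMultiplicity_of_root (p := p) (t := z) h0
  have h2 : p.derivative.rootMultiplicity z = 0 := rootMultiplicity_eq_zero h1
  omega

private lemma multTwo (p : ℂ[X]) (z : ℂ) (h0 : p.eval z = 0)
    (h1 : p.derivative.eval z = 0)
    (h2 : p.derivative.derivative.eval z ≠ 0) : p.rootMultiplicity z = 2 := by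
  have hp' : p.derivative ≠ 0 := fun h => h2 (by simp [h])
  have hp : p ≠ 0 := fun h => hp' (by simp [h])
  have hpos : 0 < p.rootMultiplicity z := (rootMultiplicity_pos hp).2 h0
  have hpos' : 0 < p.derivative.rootMultiplicity z := (rootMultiplicity_pos hp').2 h1
  have hd := derivative_rootMultiplicity_of_root (p := p) (t := z) h0
  have hd' := derivative_rootMultiplicity_of_root (p := p.derivative) (t := z) h1
  have h3 : p.derivative.derivative.rootMultiplicity z = 0 := rootMultiplicity_eq_zero h2
  omega

private lemma chebC1 (n : ℕ) (θ : ℂ) :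
    Complex.sin θ * (derivative (Chebyshev.T ℂ (n : ℤ))).eval (Complex.cos θ)
      = n * Complex.sin (n * θ) := by
  have hfun : (fun θ : ℂ => (Chebyshev.T ℂ (n : ℤ)).eval (Complex.cos θ))
      = fun θ : ℂ => Complex.cos (n * θ) := by
    funext θ
    have := Chebyshev.T_complex_cos θ (n : ℤ)
    push_cast at this ⊢
    exact this
  have h1 : HasDerivAt (fun θ : ℂ => (Chebyshev.T ℂ (n : ℤ)).eval (Complex.cos θ))
      ((derivative (Chebyshev.T ℂ (n : ℤ))).eval (Complex.cos θ) * (-Complex.sin θ)) θ :=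
    (Polynomial.hasDerivAt _ _).comp θ (Complex.hasDerivAt_cos θ)
  have hlin : HasDerivAt (fun θ : ℂ => (n : ℂ) * θ) (n : ℂ) θ := by
    simpa using (hasDerivAt_id θ).const_mul (n : ℂ)
  have h2 : HasDerivAt (fun θ : ℂ => Complex.cos ((n : ℂ) * θ))
      (-Complex.sin ((n : ℂ) * θ) * (n : ℂ)) θ :=
    (Complex.hasDerivAt_cos _).comp θ hlin
  rw [hfun] at h1
  have hu := h1.unique h2
  linear_combination -hu

private lemma chebC2 (n : ℕ) (θ : ℂ) :
    Complex.cos θ * (derivative (Chebyshev.T ℂ (n : ℤ))).eval (Complex.cos θ)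
      - Complex.sin θ ^ 2 * (derivative (derivative (Chebyshev.T ℂ (n : ℤ)))).eval (Complex.cos θ)
      = n ^ 2 * Complex.cos (n * θ) := by
  have hfun : (fun θ : ℂ =>
      Complex.sin θ * (derivative (Chebyshev.T ℂ (n : ℤ))).eval (Complex.cos θ))
      = fun θ : ℂ => (n : ℂ) * Complex.sin ((n : ℂ) * θ) := funext fun θ => chebC1 n θ
  have h1 : HasDerivAt (fun θ : ℂ =>
      Complex.sin θ * (derivative (Chebyshev.T ℂ (n : ℤ))).eval (Complex.cos θ))
      (Complex.cos θ * (derivative (Chebyshev.T ℂ (n : ℤ))).eval (Complex.cos θ)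
        + Complex.sin θ * ((derivative (derivative (Chebyshev.T ℂ (n : ℤ)))).eval (Complex.cos θ)
            * (-Complex.sin θ))) θ :=
    (Complex.hasDerivAt_sin θ).mul ((Polynomial.hasDerivAt _ _).comp θ (Complex.hasDerivAt_cos θ))
  have hlin : HasDerivAt (fun θ : ℂ => (n : ℂ) * θ) (n : ℂ) θ := by
    simpa using (hasDerivAt_id θ).const_mul (n : ℂ)
  have h2 : HasDerivAt (fun θ : ℂ => (n : ℂ) * Complex.sin ((n : ℂ) * θ))
      ((n : ℂ) * (Complex.cos ((n : ℂ) * θ) * (n : ℂ))) θ :=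
    ((Complex.hasDerivAt_sin _).comp θ hlin).const_mul (n : ℂ)
  rw [hfun] at h1
  have hu := h1.unique h2
  linear_combination hu

private lemma Tzero : ∀ n : ℕ,
    ((Chebyshev.T ℂ (n : ℤ)).eval 0) ^ 2 = if Even n then 1 else 0 := by
  have step : ∀ k : ℤ, (Chebyshev.T ℂ (k + 2)).eval 0 = -(Chebyshev.T ℂ k).eval 0 := by
    intro k
    rw [Chebyshev.T_add_two]
    simp
  intro n
  induction n using Nat.twoStepInduction with
  | zero => simp [Chebyshev.T_zero]
  | one => simp [Chebyshev.T_one, Nat.not_even_one]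
  | more k ih _ =>
    have hc : ((k + 2 : ℕ) : ℤ) = (k : ℤ) + 2 := by push_cast; ring
    rw [hc, step]
    have hpar : Even (k + 2) ↔ Even k := by
      constructor
      · intro h; rcases h with ⟨r, hr⟩; exact ⟨r - 1, by omega⟩
      · intro h; rcases h with ⟨r, hr⟩; exact ⟨r + 1, by omega⟩
    rw [neg_pow]; simp only [hpar]
    simpa using ih

theorem stmt6 (m : ℕ) (hm : 2 ≤ m) (f : Polynomial ℂ)
    (hf : f.comp (X ^ 2) = (Polynomial.Chebyshev.T ℂ (m : ℤ)) ^ 2) :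
    (∀ z : ℂ, f.derivative.eval z = 0 → f.eval z = 0 ∨ f.eval z = 1) ∧
    (Even m →
      (∀ z : ℂ, f.eval z = 0 → Polynomial.rootMultiplicity z f = 2) ∧
      Polynomial.rootMultiplicity 0 (f - 1) = 1 ∧
      Polynomial.rootMultiplicity 1 (f - 1) = 1 ∧
      (∀ z : ℂ, (f - 1).eval z = 0 → z ≠ 0 → z ≠ 1 →
        Polynomial.rootMultiplicity z (f - 1) = 2)) ∧
    (Odd m →
      Polynomial.rootMultiplicity 0 f = 1 ∧
      (∀ z : ℂ, f.eval z = 0 → z ≠ 0 → Polynomial.rootMultiplicity z f = 2) ∧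
      Polynomial.rootMultiplicity 1 (f - 1) = 1 ∧
      (∀ z : ℂ, (f - 1).eval z = 0 → z ≠ 1 →
        Polynomial.rootMultiplicity z (f - 1) = 2)) := by
  have hm0 : (m : ℂ) ≠ 0 := Nat.cast_ne_zero.2 (by omega)
  set T := Polynomial.Chebyshev.T ℂ (m : ℤ) with hT
  have e0 : ∀ x : ℂ, f.eval (x ^ 2) = (T.eval x) ^ 2 := by
    intro x
    have h := congrArg (eval x) hf
    simpa [eval_comp] using h
  have e1 : ∀ x : ℂ, 2 * x * f.derivative.eval (x ^ 2)
      = 2 * T.eval x * (derivative T).eval x := by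
    intro x
    have h := congrArg (fun p => eval x (derivative p)) hf
    simp only [derivative_comp, derivative_pow, derivative_X_pow, eval_mul, eval_comp,
      eval_pow, eval_X, eval_C, eval_natCast, derivative_X, derivative_C, derivative_one,
      eval_one, eval_zero] at h
    push_cast at h
    linear_combination h
  have e2 : ∀ x : ℂ, 2 * f.derivative.eval (x ^ 2)
      + 4 * x ^ 2 * f.derivative.derivative.eval (x ^ 2)
      = 2 * ((derivative T).eval x) ^ 2
        + 2 * T.eval x * (derivative (derivative T)).eval x := by
    intro x
    have h := congrArg (fun p => eval x (derivative (derivative p))) hf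
    simp only [derivative_comp, derivative_pow, derivative_X_pow, derivative_mul, eval_mul,
      eval_add, eval_comp, eval_pow, eval_X, eval_C, eval_natCast, derivative_X, derivative_C,
      derivative_one, eval_one, eval_zero] at h
    push_cast at h
    linear_combination h
  have tc : ∀ θ : ℂ, T.eval (Complex.cos θ) = Complex.cos ((m : ℂ) * θ) := by
    intro θ
    have := Chebyshev.T_complex_cos θ (m : ℤ)
    rw [hT]
    push_cast at this ⊢
    exact this
  have c1' : ∀ θ : ℂ, Complex.sin θ * (derivative T).eval (Complex.cos θ)
      = m * Complex.sin (m * θ) := by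
    intro θ; rw [hT]; exact chebC1 m θ
  have c2' : ∀ θ : ℂ, Complex.cos θ * (derivative T).eval (Complex.cos θ)
      - Complex.sin θ ^ 2 * (derivative (derivative T)).eval (Complex.cos θ)
      = m ^ 2 * Complex.cos (m * θ) := by
    intro θ; rw [hT]; exact chebC2 m θ
  have sq_exists : ∀ z : ℂ, ∃ x : ℂ, x ^ 2 = z := fun z =>
    IsAlgClosed.exists_pow_nat_eq z zero_lt_two
  have hdsub : derivative (f - 1) = derivative f := by simp
  -- Part A
  have partA : ∀ z : ℂ, f.derivative.eval z = 0 → f.eval z = 0 ∨ f.eval z = 1 := by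
    intro z hz
    obtain ⟨x, hx⟩ := sq_exists z
    obtain ⟨θ, hθ⟩ := Complex.cos_surjective x
    have h1 := e1 x
    rw [hx, hz, mul_zero] at h1
    have hprod : T.eval x * (derivative T).eval x = 0 := by linear_combination -h1 / 2
    rcases mul_eq_zero.1 hprod with h | h
    · left; rw [← hx, e0 x, h]; ring
    · right
      have c1 := c1' θ
      rw [hθ, h, mul_zero] at c1
      have hs : Complex.sin ((m : ℂ) * θ) = 0 :=
        (mul_eq_zero.1 c1.symm).resolve_left hm0
      have hfz : f.eval z = Complex.cos ((m : ℂ) * θ) ^ 2 := by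
        rw [← hx, e0 x, ← hθ, tc θ]
      rw [hfz]
      have hpy := Complex.sin_sq_add_cos_sq ((m : ℂ) * θ)
      linear_combination hpy - Complex.sin ((m : ℂ) * θ) * hs
  -- multiplicity 2 at roots of f
  have key2 : ∀ z : ℂ, f.eval z = 0 → z ≠ 0 → f.rootMultiplicity z = 2 := by
    intro z hz hz0
    obtain ⟨x, hx⟩ := sq_exists z
    obtain ⟨θ, hθ⟩ := Complex.cos_surjective x
    have hx0 : x ≠ 0 := fun h => hz0 (by rw [← hx, h]; ring)
    have hT2 : T.eval x ^ 2 = 0 := by rw [← e0 x, hx, hz]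
    have hTx : T.eval x = 0 := pow_eq_zero_iff two_ne_zero |>.1 hT2
    have hcos : Complex.cos ((m : ℂ) * θ) = 0 := by rw [← tc θ, hθ]; exact hTx
    have hsin : Complex.sin ((m : ℂ) * θ) ≠ 0 := by
      intro h
      have hpy := Complex.sin_sq_add_cos_sq ((m : ℂ) * θ)
      rw [h, hcos] at hpy; norm_num at hpy
    have c1 := c1' θ
    rw [hθ] at c1
    have hT'x : (derivative T).eval x ≠ 0 := by
      intro h
      rw [h, mul_zero] at c1
      exact hsin ((mul_eq_zero.1 c1.symm).resolve_left hm0)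
    have hf' : f.derivative.eval z = 0 := by
      have h1 := e1 x
      rw [hx, hTx] at h1
      have h2 : 2 * x * f.derivative.eval z = 0 := by rw [h1]; ring
      rcases mul_eq_zero.1 h2 with h' | h'
      · rcases mul_eq_zero.1 h' with h'' | h''
        · norm_num at h''
        · exact absurd h'' hx0
      · exact h'
    have hf'' : f.derivative.derivative.eval z ≠ 0 := by
      intro h
      have h2 := e2 x
      rw [hx, hf', h, hTx] at h2
      have h3 : (derivative T).eval x ^ 2 = 0 := by linear_combination -h2 / 2
      exact hT'x (pow_eq_zero_iff two_ne_zero |>.1 h3)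
    exact multTwo f z hz hf' hf''
  -- multiplicity 2 at roots of f - 1 away from 0, 1
  have key3 : ∀ z : ℂ, (f - 1).eval z = 0 → z ≠ 0 → z ≠ 1 →
      (f - 1).rootMultiplicity z = 2 := by
    intro z hz hz0 hz1
    have hfz : f.eval z = 1 := by
      have := hz; simp only [eval_sub, eval_one, sub_eq_zero] at this; exact this
    obtain ⟨x, hx⟩ := sq_exists z
    obtain ⟨θ, hθ⟩ := Complex.cos_surjective x
    have hx0 : x ≠ 0 := fun h => hz0 (by rw [← hx, h]; ring)
    have hT2 : T.eval x ^ 2 = 1 := by rw [← e0 x, hx, hfz]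
    have hTc : T.eval x = Complex.cos ((m : ℂ) * θ) := by rw [← hθ, tc]
    have hcos2 : Complex.cos ((m : ℂ) * θ) ^ 2 = 1 := by rw [← hTc]; exact hT2
    have hsin : Complex.sin ((m : ℂ) * θ) = 0 := by
      have hpy := Complex.sin_sq_add_cos_sq ((m : ℂ) * θ)
      have h3 : Complex.sin ((m : ℂ) * θ) ^ 2 = 0 := by linear_combination hpy - hcos2
      exact pow_eq_zero_iff two_ne_zero |>.1 h3
    have hsθ : Complex.sin θ ≠ 0 := by
      intro h
      have hpy := Complex.sin_sq_add_cos_sq θ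
      rw [h] at hpy
      apply hz1
      rw [← hx, ← hθ]
      linear_combination hpy
    have c1 := c1' θ
    rw [hθ, hsin, mul_zero] at c1
    have hT' : (derivative T).eval x = 0 := (mul_eq_zero.1 c1).resolve_left hsθ
    have hf' : f.derivative.eval z = 0 := by
      have h1 := e1 x
      rw [hx, hT', mul_zero] at h1
      rcases mul_eq_zero.1 h1 with h' | h'
      · rcases mul_eq_zero.1 h' with h'' | h''
        · norm_num at h''
        · exact absurd h'' hx0
      · exact h'
    have c2 := c2' θ
    rw [hθ, hT'] at c2
    have hf'' : f.derivative.derivative.eval z ≠ 0 := by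
      intro h
      have h2 := e2 x
      rw [hx, hf', h, hT'] at h2
      have hTT'' : T.eval x * (derivative (derivative T)).eval x = 0 := by
        linear_combination -h2 / 2
      rw [hTc] at hTT''
      have hmz : (m : ℂ) ^ 2 = 0 := by
        linear_combination (-Complex.cos ((m : ℂ) * θ)) * c2
          - Complex.sin θ ^ 2 * hTT'' - (m : ℂ) ^ 2 * hcos2
      exact hm0 (pow_eq_zero_iff two_ne_zero |>.1 hmz)
    refine multTwo (f - 1) z hz ?_ ?_
    · rw [hdsub]; exact hf'
    · rw [hdsub]; exact hf''
  -- multiplicity 1 of f - 1 at 1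
  have hT1 : T.eval 1 = 1 := by
    have h := tc 0
    simpa using h
  have hT'1 : (derivative T).eval 1 = (m : ℂ) ^ 2 := by
    have c2 := c2' 0
    simpa using c2
  have mult11 : (f - 1).rootMultiplicity 1 = 1 := by
    apply multOne
    · have h := e0 1
      rw [one_pow, hT1] at h
      simp [h]
    · rw [hdsub]
      have h1 := e1 1
      rw [one_pow, hT1, hT'1] at h1
      have hf1 : f.derivative.eval 1 = (m : ℂ) ^ 2 := by linear_combination h1 / 2
      rw [hf1]
      exact pow_ne_zero 2 hm0
  -- values at 0 via θ0 = π/2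
  have hcθ0 : Complex.cos ((Real.pi : ℂ) / 2) = 0 := Complex.cos_pi_div_two
  have hsθ0 : Complex.sin ((Real.pi : ℂ) / 2) = 1 := Complex.sin_pi_div_two
  have htc0 : T.eval 0 = Complex.cos ((m : ℂ) * ((Real.pi : ℂ) / 2)) := by
    rw [← hcθ0, tc]
  have c10 := c1' ((Real.pi : ℂ) / 2)
  rw [hcθ0, hsθ0, one_mul] at c10
  have c20 := c2' ((Real.pi : ℂ) / 2)
  rw [hcθ0, hsθ0, one_pow, zero_mul, zero_sub] at c20
  refine ⟨partA, ?_, ?_⟩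
  · -- Even case
    intro hE
    have hT0sq : T.eval 0 ^ 2 = 1 := by
      rw [hT]; simpa [hE] using Tzero m
    have hsin0 : Complex.sin ((m : ℂ) * ((Real.pi : ℂ) / 2)) = 0 := by
      have hpy := Complex.sin_sq_add_cos_sq ((m : ℂ) * ((Real.pi : ℂ) / 2))
      have h3 : Complex.sin ((m : ℂ) * ((Real.pi : ℂ) / 2)) ^ 2 = 0 := by
        rw [← htc0] at hpy
        linear_combination hpy - hT0sq
      exact pow_eq_zero_iff two_ne_zero |>.1 h3
    have hT'0 : (derivative T).eval 0 = 0 := by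
      rw [hsin0, mul_zero] at c10; exact c10
    have hT''0 : (derivative (derivative T)).eval 0 = -(m : ℂ) ^ 2 * T.eval 0 := by
      rw [← htc0] at c20
      linear_combination -c20
    have hfz0 : ∀ z : ℂ, f.eval z = 0 → z ≠ 0 := by
      intro z hz h0
      rw [h0] at hz
      have h := e0 0
      rw [show ((0 : ℂ) ^ 2 = 0) by ring, hz] at h
      rw [← h] at hT0sq
      norm_num at hT0sq
    refine ⟨fun z hz => key2 z hz (hfz0 z hz), ?_, mult11, key3⟩
    -- mult of f - 1 at 0 is 1
    apply multOne
    · have h := e0 0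
      rw [show ((0 : ℂ) ^ 2 = 0) by ring] at h
      simp [h, hT0sq]
    · rw [hdsub]
      have h2 := e2 0
      rw [show ((0 : ℂ) ^ 2 = 0) by ring, hT'0, hT''0] at h2
      have hf0 : f.derivative.eval 0 = -(m : ℂ) ^ 2 := by
        linear_combination h2 / 2 - (m : ℂ) ^ 2 * hT0sq
      rw [hf0]
      exact neg_ne_zero.2 (pow_ne_zero 2 hm0)
  · -- Odd case
    intro hO
    have hT0sq : T.eval 0 ^ 2 = 0 := by
      rw [hT]
      have := Tzero m
      rw [if_neg (Nat.not_even_iff_odd.2 hO)] at this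
      exact this
    have hT0 : T.eval 0 = 0 := pow_eq_zero_iff two_ne_zero |>.1 hT0sq
    have hcos0 : Complex.cos ((m : ℂ) * ((Real.pi : ℂ) / 2)) = 0 := by
      rw [← htc0]; exact hT0
    have hsin0sq : Complex.sin ((m : ℂ) * ((Real.pi : ℂ) / 2)) ^ 2 = 1 := by
      have hpy := Complex.sin_sq_add_cos_sq ((m : ℂ) * ((Real.pi : ℂ) / 2))
      linear_combination hpy - Complex.cos ((m : ℂ) * ((Real.pi : ℂ) / 2)) * hcos0
    have mult0 : f.rootMultiplicity 0 = 1 := by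
      apply multOne
      · have h := e0 0
        rw [show ((0 : ℂ) ^ 2 = 0) by ring, hT0] at h
        simpa using h
      · have h2 := e2 0
        rw [show ((0 : ℂ) ^ 2 = 0) by ring, hT0] at h2
        have hf0 : f.derivative.eval 0 = ((derivative T).eval 0) ^ 2 := by
          linear_combination h2 / 2
        rw [hf0, c10]
        intro h
        have : (m : ℂ) ^ 2 = 0 := by
          linear_combination h - (m : ℂ) ^ 2 * hsin0sq
        exact hm0 (pow_eq_zero_iff two_ne_zero |>.1 this)
    have h01 : (f - 1).eval 0 ≠ 0 := by
      have h : f.eval 0 = 0 := by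
        have h := e0 0
        rw [show ((0 : ℂ) ^ 2 = 0) by ring, hT0] at h
        simpa using h
      simp [h]
    refine ⟨mult0, fun z hz => key2 z hz, mult11, fun z hz hz1 => key3 z hz ?_ hz1⟩
    intro h0
    rw [h0] at hz
    exact h01 hz
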